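/- The partial derivative of the relevance functional with respect to a single kernel entry: fix a matrix q : 𝒳 × 𝒳̂ → ℝ with all entries positive and a coordinate (x₀, x̂₀). Then the real function t ↦ G(q[(x₀,x̂₀) ↦ t]), obtained from G by replacing the entry q(x₀,x̂₀) with t, has derivative at the point t = q(x₀,x̂₀) equal to pX(x₀) · Σ_y pYX(y|x₀) · log( pq(x̂₀|y) / pq(x̂₀) ). -/

import Mathlib

/-- Partial derivative of the relevance functional
`G(q) = Σ_{x̂,y} pY(y)·pq(x̂|y)·log(pq(x̂|y)/pq(x̂))`, where
`pq(x̂) = Σ_x pX(x)·q(x,x̂)`, `pq(x̂|y) = Σ_x q(x,x̂)·p(x|y)`,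
`pY(y) = Σ_x pX(x)·pYX(y|x)` and `p(x|y) = pX(x)·pYX(y|x)/pY(y)`,
with respect to the single kernel entry `q(x₀,x̂₀)`:
the function `t ↦ G(q[(x₀,x̂₀) ↦ t])` has derivative
`pX(x₀)·Σ_y pYX(y|x₀)·log(pq(x̂₀|y)/pq(x̂₀))` at the point `t = q(x₀,x̂₀)`. -/
theorem relevance_functional_partial_derivative
    {𝒳 𝒳h 𝒴 : Type*} [Fintype 𝒳] [Fintype 𝒳h] [Fintype 𝒴]
    [Nonempty 𝒳] [Nonempty 𝒳h] [Nonempty 𝒴]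
    [DecidableEq 𝒳] [DecidableEq 𝒳h]
    (pX : 𝒳 → ℝ) (hpXpos : ∀ x, 0 < pX x) (hpXsum : ∑ x, pX x = 1)
    (pYX : 𝒳 → 𝒴 → ℝ) (hpYXpos : ∀ x y, 0 < pYX x y)
    (hpYXsum : ∀ x, ∑ y, pYX x y = 1)
    (q : 𝒳 × 𝒳h → ℝ) (hqpos : ∀ x xh, 0 < q (x, xh))
    (x₀ : 𝒳) (xh₀ : 𝒳h) :
    HasDerivAt
      (fun t : ℝ =>
        ∑ xh, ∑ y, (∑ x, pX x * pYX x y) *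
          (∑ x, Function.update q (x₀, xh₀) t (x, xh) *
            (pX x * pYX x y / ∑ x', pX x' * pYX x' y)) *
          Real.log
            ((∑ x, Function.update q (x₀, xh₀) t (x, xh) *
              (pX x * pYX x y / ∑ x', pX x' * pYX x' y)) /
             ∑ x, pX x * Function.update q (x₀, xh₀) t (x, xh)))
      (pX x₀ * ∑ y, pYX x₀ y *
        Real.log
          ((∑ x, q (x, xh₀) * (pX x * pYX x y / ∑ x', pX x' * pYX x' y)) /
           ∑ x, pX x * q (x, xh₀)))
      (q (x₀, xh₀)) := by
  classical
  set t₀ := q (x₀, xh₀) with ht₀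
  set pY : 𝒴 → ℝ := fun y => ∑ x, pX x * pYX x y with hpYdef
  have hpYpos : ∀ y, 0 < pY y := fun y =>
    Finset.sum_pos (fun x _ => mul_pos (hpXpos x) (hpYXpos x y)) Finset.univ_nonempty
  set A : 𝒴 → ℝ := fun y => ∑ x, q (x, xh₀) * (pX x * pYX x y / pY y) with hAdef
  set B : ℝ := ∑ x, pX x * q (x, xh₀) with hBdef
  have hApos : ∀ y, 0 < A y := fun y =>
    Finset.sum_pos (fun x _ => mul_pos (hqpos x xh₀)
      (div_pos (mul_pos (hpXpos x) (hpYXpos x y)) (hpYpos y))) Finset.univ_nonempty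
  have hBpos : 0 < B :=
    Finset.sum_pos (fun x _ => mul_pos (hpXpos x) (hqpos x xh₀)) Finset.univ_nonempty
  have hupdval : ∀ p : 𝒳 × 𝒳h, Function.update q (x₀, xh₀) t₀ p = q p := by
    intro p; rw [ht₀, Function.update_eq_self]
  have hAval : ∀ y,
      (∑ x, Function.update q (x₀, xh₀) t₀ (x, xh₀) * (pX x * pYX x y / pY y)) = A y := by
    intro y; simp only [hupdval, hAdef]
  have hBval : (∑ x, pX x * Function.update q (x₀, xh₀) t₀ (x, xh₀)) = B := by
    simp only [hupdval, hBdef]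
  -- derivative of the conditional decoder distribution entry
  have hAder : ∀ y, HasDerivAt
      (fun t => ∑ x, Function.update q (x₀, xh₀) t (x, xh₀) * (pX x * pYX x y / pY y))
      (pX x₀ * pYX x₀ y / pY y) t₀ := by
    intro y
    have h := HasDerivAt.fun_sum (u := Finset.univ)
      (A := fun x t => Function.update q (x₀, xh₀) t (x, xh₀) * (pX x * pYX x y / pY y))
      (A' := fun x => if x = x₀ then pX x₀ * pYX x₀ y / pY y else 0) (x := t₀) ?_
    · have hs : (∑ x, if x = x₀ then pX x₀ * pYX x₀ y / pY y else 0)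
          = pX x₀ * pYX x₀ y / pY y := by simp
      rwa [hs] at h
    · intro x _
      by_cases hx : x = x₀
      · subst hx
        simp only [Function.update_self, if_pos rfl]
        simpa using (hasDerivAt_id t₀).mul_const (pX x * pYX x y / pY y)
      · simp only [if_neg hx]
        have hne : ((x : 𝒳), xh₀) ≠ (x₀, xh₀) := by simp [hx]
        simp only [Function.update_of_ne hne]
        exact hasDerivAt_const t₀ _
  -- derivative of the marginal decoder distribution entry
  have hBder : HasDerivAt
      (fun t => ∑ x, pX x * Function.update q (x₀, xh₀) t (x, xh₀)) (pX x₀) t₀ := by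
    have h := HasDerivAt.fun_sum (u := Finset.univ)
      (A := fun x t => pX x * Function.update q (x₀, xh₀) t (x, xh₀))
      (A' := fun x => if x = x₀ then pX x₀ else 0) (x := t₀) ?_
    · have hs : (∑ x, if x = x₀ then pX x₀ else 0) = pX x₀ := by simp
      rwa [hs] at h
    · intro x _
      by_cases hx : x = x₀
      · subst hx
        simp only [Function.update_self, if_pos rfl]
        simpa using (hasDerivAt_id t₀).const_mul (pX x)
      · simp only [if_neg hx]
        have hne : ((x : 𝒳), xh₀) ≠ (x₀, xh₀) := by simp [hx]
        simp only [Function.update_of_ne hne]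
        exact hasDerivAt_const t₀ _
  set D : 𝒴 → ℝ := fun y =>
    pX x₀ * pYX x₀ y * Real.log (A y / B) + pX x₀ * pYX x₀ y - pY y * A y * pX x₀ / B
    with hDdef
  -- per-y derivative for the xh = xh₀ column
  have hDy : ∀ y, HasDerivAt
      (fun t => pY y *
        (∑ x, Function.update q (x₀, xh₀) t (x, xh₀) * (pX x * pYX x y / pY y)) *
        Real.log
          ((∑ x, Function.update q (x₀, xh₀) t (x, xh₀) * (pX x * pYX x y / pY y)) /
            ∑ x, pX x * Function.update q (x₀, xh₀) t (x, xh₀)))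
      (D y) t₀ := by
    intro y
    have hBne : (∑ x, pX x * Function.update q (x₀, xh₀) t₀ (x, xh₀)) ≠ 0 := by
      rw [hBval]; exact hBpos.ne'
    have hdiv := (hAder y).fun_div hBder hBne
    have hRne : ((∑ x, Function.update q (x₀, xh₀) t₀ (x, xh₀) * (pX x * pYX x y / pY y)) /
        ∑ x, pX x * Function.update q (x₀, xh₀) t₀ (x, xh₀)) ≠ 0 := by
      rw [hAval, hBval]
      exact (div_pos (hApos y) hBpos).ne'
    have hlog := hdiv.log hRne
    have hmul := ((hAder y).const_mul (pY y)).mul hlog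
    refine hmul.congr_deriv ?_
    beta_reduce
    rw [hAval, hBval, hDdef]
    have h1 : pY y ≠ 0 := (hpYpos y).ne'
    have h2 : B ≠ 0 := hBpos.ne'
    have h3 : A y ≠ 0 := (hApos y).ne'
    field_simp
    ring
  -- assemble the full derivative
  have main : HasDerivAt
      (fun t : ℝ =>
        ∑ xh, ∑ y, pY y *
          (∑ x, Function.update q (x₀, xh₀) t (x, xh) * (pX x * pYX x y / pY y)) *
          Real.log
            ((∑ x, Function.update q (x₀, xh₀) t (x, xh) * (pX x * pYX x y / pY y)) /
              ∑ x, pX x * Function.update q (x₀, xh₀) t (x, xh)))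
      (∑ xh, if xh = xh₀ then (∑ y, D y) else 0) t₀ := by
    apply HasDerivAt.fun_sum
    intro xh _
    by_cases hxh : xh = xh₀
    · subst hxh
      rw [if_pos rfl]
      exact HasDerivAt.fun_sum fun y _ => hDy y
    · rw [if_neg hxh]
      have hrw : ∀ (t : ℝ) (x : 𝒳), Function.update q (x₀, xh₀) t (x, xh) = q (x, xh) := by
        intro t x
        exact Function.update_of_ne (by simp [hxh]) _ _
      simp only [hrw]
      exact hasDerivAt_const t₀ _
  have hEB : ∑ y, pY y * A y = B := by
    have h1 : ∀ y, pY y * A y = ∑ x, q (x, xh₀) * (pX x * pYX x y) := by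
      intro y
      rw [hAdef, Finset.mul_sum]
      refine Finset.sum_congr rfl fun x _ => ?_
      field_simp [(hpYpos y).ne']
    calc ∑ y, pY y * A y = ∑ y, ∑ x, q (x, xh₀) * (pX x * pYX x y) :=
          Finset.sum_congr rfl fun y _ => h1 y
      _ = ∑ x, ∑ y, q (x, xh₀) * (pX x * pYX x y) := Finset.sum_comm
      _ = B := by
          rw [hBdef]
          refine Finset.sum_congr rfl fun x _ => ?_
          rw [← Finset.mul_sum]
          have : ∑ y, pX x * pYX x y = pX x := by
            rw [← Finset.mul_sum, hpYXsum x, mul_one]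
          rw [Finset.mul_sum, ← Finset.mul_sum, ← Finset.mul_sum, hpYXsum x]
          ring
  have hfinal : (∑ xh, if xh = xh₀ then (∑ y, D y) else 0)
      = pX x₀ * ∑ y, pYX x₀ y * Real.log (A y / B) := by
    have hs : (∑ xh, if xh = xh₀ then (∑ y, D y) else 0) = ∑ y, D y := by simp
    rw [hs]
    calc ∑ y, D y
        = ∑ y, (pX x₀ * (pYX x₀ y * Real.log (A y / B))
            + (pX x₀ * pYX x₀ y - (pX x₀ / B) * (pY y * A y))) := by
          refine Finset.sum_congr rfl fun y _ => ?_
          rw [hDdef]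
          have h2 : B ≠ 0 := hBpos.ne'
          field_simp
          ring
      _ = pX x₀ * (∑ y, pYX x₀ y * Real.log (A y / B))
            + (pX x₀ * ∑ y, pYX x₀ y - (pX x₀ / B) * ∑ y, pY y * A y) := by
          rw [Finset.sum_add_distrib, Finset.sum_sub_distrib, ← Finset.mul_sum,
            ← Finset.mul_sum, ← Finset.mul_sum]
      _ = pX x₀ * ∑ y, pYX x₀ y * Real.log (A y / B) := by
          rw [hpYXsum x₀, hEB, mul_one, div_mul_cancel₀ _ hBpos.ne']
          ring
  exact hfinal ▸ main
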